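/- There is no nontrivial 3-(v,k,1) design D admitting a block-transitive group of automorphisms G with G ≅ A_5 or G ≅ S_5. (Nontrivial means 3 < k < v.) -/

import Mathlib

set_option maxRecDepth 100000

open Finset MulAction Pointwise

private lemma six_choose' (n : ℕ) : 6 * n.choose 3 = (n-2) * ((n-1) * n) := by
  have h := (Nat.descFactorial_eq_factorial_mul_choose n 3).symm
  rwa [Nat.descFactorial_succ, Nat.descFactorial_succ, Nat.descFactorial_one,
    show Nat.factorial 3 = 6 from rfl] at h

private lemma two_choose' (n : ℕ) : 2 * n.choose 2 = (n-1) * n := by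
  have h := (Nat.descFactorial_eq_factorial_mul_choose n 2).symm
  rwa [Nat.descFactorial_succ, Nat.descFactorial_one,
    show Nat.factorial 2 = 2 from rfl] at h

private lemma arith' : ∀ l : Fin 17, ∀ K : Fin 240, 2 ≤ l.val → 2 ≤ K.val →
    (K.val+1) ∣ (l.val*(l.val*K.val+1)) →
    ((K.val+2)*(K.val+1)) ∣ (l.val*((l.val*K.val+2)*(l.val*K.val+1))) →
    ¬ ((l.val*((l.val*K.val+2)*(l.val*K.val+1))) / ((K.val+2)*(K.val+1)) ∣ 40) := by decide

private lemma endgame (v k r l B : ℕ) (hk : 3 < k) (hkv : k < v) (hv5 : 5 ≤ v)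
    (hIII : v.choose 3 = B * k.choose 3)
    (hII : (v-1).choose 2 = r * (k-1).choose 2)
    (hI : v - 2 = l * (k - 2))
    (hBdvd : B ∣ 40) : False := by
  have E3 : (v-2)*((v-1)*v) = B * ((k-2)*((k-1)*k)) := by
    rw [← six_choose', ← six_choose', hIII]; ring
  have E2 : (v-2)*(v-1) = r * ((k-2)*(k-1)) := by
    have t1 := two_choose' (v-1)
    have t2 := two_choose' (k-1)
    rw [show v-1-1 = v-2 from by omega] at t1
    rw [show k-1-1 = k-2 from by omega] at t2
    calc (v-2)*(v-1) = 2 * (v-1).choose 2 := t1.symm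
    _ = 2 * (r * (k-1).choose 2) := by rw [hII]
    _ = r * (2 * (k-1).choose 2) := by ring
    _ = r * ((k-2)*(k-1)) := by rw [t2]
  obtain ⟨K, hKeq, hK2⟩ : ∃ K, k = K + 2 ∧ 2 ≤ K := ⟨k-2, by omega, by omega⟩
  subst hKeq
  rw [show K+2-2 = K from by omega, show K+2-1 = K+1 from by omega] at E2 E3
  rw [show K+2-2 = K from by omega] at hI
  have hl2 : 2 ≤ l := by
    by_contra hc
    push_neg at hc
    interval_cases l <;> omega
  rw [show v-2 = l*K from hI, show v-1 = l*K+1 from by omega] at E2 E3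
  rw [show v = l*K+2 from by omega] at E3
  have hKpos : 0 < K := by omega
  have E2' : l*(l*K+1) = r*(K+1) := by
    apply Nat.eq_of_mul_eq_mul_left hKpos
    ring_nf
    ring_nf at E2
    linarith [E2]
  have E3' : l*((l*K+1)*(l*K+2)) = B*((K+1)*(K+2)) := by
    apply Nat.eq_of_mul_eq_mul_left hKpos
    ring_nf
    ring_nf at E3
    linarith [E3]
  have hB40 : B ≤ 40 := Nat.le_of_dvd (by norm_num) hBdvd
  have hl16 : l ≤ 16 := by
    by_contra hc
    push_neg at hc
    have hKl : 17*K ≤ l*K := Nat.mul_le_mul_right K hc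
    have h1 : 17*((17*K+1)*(17*K+2)) ≤ l*((l*K+1)*(l*K+2)) :=
      Nat.mul_le_mul hc (Nat.mul_le_mul (by omega) (by omega))
    rw [E3'] at h1
    have h2 : B*((K+1)*(K+2)) ≤ 40*((K+1)*(K+2)) := Nat.mul_le_mul_right _ hB40
    nlinarith [hK2]
  have hll : l ≤ l*l := Nat.le_mul_of_pos_left l (by omega)
  have e2 : r*(K+1) + (l*l - l) = (l*l)*(K+1) := by
    have h1 : r*(K+1) = l*l*K + l := by rw [← E2']; ring
    have h2 : (l*l)*(K+1) = l*l*K + l*l := by ring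
    omega
  have hrl : r ≤ l*l := by
    by_contra hc
    push_neg at hc
    have h3 : (l*l)*(K+1) < r*(K+1) := (Nat.mul_lt_mul_right (by omega : 0 < K+1)).2 hc
    omega
  have hd : (l*l - r)*(K+1) = l*l - l := by
    rw [Nat.sub_mul]
    omega
  have hd1 : 1 ≤ l*l - r := by
    by_contra hc
    push_neg at hc
    have h4 : l*l - r = 0 := by omega
    rw [h4, zero_mul] at hd
    have h5 : 2*l ≤ l*l := by nlinarith
    omega
  have hK239 : K ≤ 239 := by
    have h6 : K+1 ≤ (l*l - r)*(K+1) := Nat.le_mul_of_pos_left _ hd1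
    have h7 : l*l ≤ 16*l := Nat.mul_le_mul_right l hl16
    omega
  have hdvd1 : (K+1) ∣ l*(l*K+1) := ⟨r, E2'.trans (mul_comm r (K+1))⟩
  have hdvd2 : ((K+2)*(K+1)) ∣ l*((l*K+2)*(l*K+1)) :=
    ⟨B, by rw [show l*((l*K+2)*(l*K+1)) = l*((l*K+1)*(l*K+2)) from by ring, E3']; ring⟩
  have hq : (l*((l*K+2)*(l*K+1))) / ((K+2)*(K+1)) = B := by
    apply Nat.div_eq_of_eq_mul_left (by positivity)
    rw [show l*((l*K+2)*(l*K+1)) = l*((l*K+1)*(l*K+2)) from by ring, E3']; ring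
  exact arith' ⟨l, by omega⟩ ⟨K, by omega⟩ hl2 hK2 hdvd1 hdvd2 (by rw [hq]; exact hBdvd)

/-- There is no nontrivial `3`-`(v,k,1)` design (`3 < k < v`) admitting a
block-transitive group of automorphisms isomorphic to `A₅` or `S₅`. -/
theorem no_block_transitive_design_A5_S5
    (P : Type*) [Fintype P] [DecidableEq P]
    (𝓑 : Finset (Finset P)) (v k : ℕ)
    (hv : Fintype.card P = v)
    (hk : 3 < k) (hkv : k < v)
    (hblocks : ∀ b ∈ 𝓑, b.card = k)
    (hdesign : ∀ s : Finset P, s.card = 3 →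
      (𝓑.filter (fun b => s ⊆ b)).card = 1)
    (G : Type*) [Group G] [MulAction G P] [FaithfulSMul G P]
    (hiso : Nonempty (G ≃* alternatingGroup (Fin 5)) ∨
      Nonempty (G ≃* Equiv.Perm (Fin 5)))
    (hpres : ∀ (g : G), ∀ b ∈ 𝓑, b.image (fun x => g • x) ∈ 𝓑)
    (htrans : ∀ b₁ ∈ 𝓑, ∀ b₂ ∈ 𝓑, ∃ g : G, b₁.image (fun x => g • x) = b₂) :
    False := by
  classical
  -- uniqueness and existence of blocks through a triple
  have huniq : ∀ s : Finset P, s.card = 3 → ∀ b₁ ∈ 𝓑, ∀ b₂ ∈ 𝓑, s ⊆ b₁ → s ⊆ b₂ → b₁ = b₂ := by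
    intro s hs b₁ hb₁ b₂ hb₂ h1 h2
    obtain ⟨c, hc⟩ := Finset.card_eq_one.1 (hdesign s hs)
    have e1 : b₁ ∈ 𝓑.filter (fun b => s ⊆ b) := Finset.mem_filter.2 ⟨hb₁, h1⟩
    have e2 : b₂ ∈ 𝓑.filter (fun b => s ⊆ b) := Finset.mem_filter.2 ⟨hb₂, h2⟩
    rw [hc, Finset.mem_singleton] at e1 e2
    rw [e1, e2]
  have hex : ∀ s : Finset P, s.card = 3 → ∃ b ∈ 𝓑, s ⊆ b := by
    intro s hs
    have h : (𝓑.filter fun b => s ⊆ b).Nonempty := by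
      rw [← Finset.card_pos, hdesign s hs]; norm_num
    obtain ⟨b, hb⟩ := h
    exact ⟨b, (Finset.mem_filter.1 hb).1, (Finset.mem_filter.1 hb).2⟩
  have hv5 : 5 ≤ v := by omega
  -- global triple count : choose v 3 = B * choose k 3
  have hIII : v.choose 3 = 𝓑.card * k.choose 3 := by
    have hcover : (univ : Finset P).powersetCard 3 = 𝓑.biUnion (fun b => b.powersetCard 3) := by
      ext s
      simp only [Finset.mem_powersetCard, Finset.mem_biUnion]
      constructor
      · rintro ⟨-, hs⟩
        obtain ⟨b, hb, hsb⟩ := hex s hs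
        exact ⟨b, hb, hsb, hs⟩
      · rintro ⟨b, _, _, hs⟩
        exact ⟨Finset.subset_univ s, hs⟩
    have hcard : ((univ : Finset P).powersetCard 3).card = ∑ b ∈ 𝓑, (b.powersetCard 3).card := by
      rw [hcover]
      apply Finset.card_biUnion
      intro b hb b' hb' hne
      rw [Function.onFun, Finset.disjoint_left]
      intro s hs hs'
      rw [Finset.mem_powersetCard] at hs hs'
      exact hne (huniq s hs.2 b hb b' hb' hs.1 hs'.1)
    rw [Finset.card_powersetCard, Finset.card_univ, hv] at hcard
    rw [hcard, Finset.sum_congr rfl (fun b hb => by rw [Finset.card_powersetCard, hblocks b hb]),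
      Finset.sum_const, smul_eq_mul]
  obtain ⟨x, y, hxy⟩ : ∃ x y : P, x ≠ y := by
    apply Fintype.exists_pair_of_one_lt_card; omega
  -- point count at x
  obtain ⟨r, hII⟩ : ∃ r : ℕ, (v-1).choose 2 = r * (k-1).choose 2 := by
    refine ⟨(𝓑.filter (fun b => x ∈ b)).card, ?_⟩
    have hcover : ((univ : Finset P).erase x).powersetCard 2 =
        (𝓑.filter (fun b => x ∈ b)).biUnion (fun b => (b.erase x).powersetCard 2) := by
      ext p
      simp only [Finset.mem_powersetCard, Finset.mem_biUnion, Finset.mem_filter]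
      constructor
      · rintro ⟨hps, hp2⟩
        have hxp : x ∉ p := fun h => (Finset.mem_erase.1 (hps h)).1 rfl
        have hs3 : (insert x p).card = 3 := by rw [Finset.card_insert_of_notMem hxp, hp2]
        obtain ⟨b, hb, hsb⟩ := hex _ hs3
        refine ⟨b, ⟨hb, hsb (Finset.mem_insert_self x p)⟩, ?_, hp2⟩
        intro z hz
        exact Finset.mem_erase.2 ⟨fun h => hxp (h ▸ hz), hsb (Finset.mem_insert_of_mem hz)⟩
      · rintro ⟨b, ⟨_, _⟩, hpb, hp2⟩
        exact ⟨fun z hz => Finset.mem_erase.2 ⟨(Finset.mem_erase.1 (hpb hz)).1, Finset.mem_univ z⟩, hp2⟩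
    have hdisj : ∀ b ∈ 𝓑.filter (fun b => x ∈ b), ∀ b' ∈ 𝓑.filter (fun b => x ∈ b), b ≠ b' →
        Disjoint ((b.erase x).powersetCard 2) ((b'.erase x).powersetCard 2) := by
      intro b hb b' hb' hne
      rw [Finset.mem_filter] at hb hb'
      rw [Finset.disjoint_left]
      intro p hp hp'
      rw [Finset.mem_powersetCard] at hp hp'
      have hxp : x ∉ p := fun h => (Finset.mem_erase.1 (hp.1 h)).1 rfl
      have hs3 : (insert x p).card = 3 := by rw [Finset.card_insert_of_notMem hxp, hp.2]
      refine hne (huniq _ hs3 b hb.1 b' hb'.1 ?_ ?_)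
      · exact Finset.insert_subset hb.2 (hp.1.trans (Finset.erase_subset x b))
      · exact Finset.insert_subset hb'.2 (hp'.1.trans (Finset.erase_subset x b'))
    have hcard : (((univ : Finset P).erase x).powersetCard 2).card =
        ∑ b ∈ 𝓑.filter (fun b => x ∈ b), ((b.erase x).powersetCard 2).card := by
      rw [hcover]; exact Finset.card_biUnion hdisj
    rw [Finset.card_powersetCard, Finset.card_erase_of_mem (Finset.mem_univ x),
      Finset.card_univ, hv] at hcard
    rw [hcard, Finset.sum_congr rfl (fun b hb => by
      rw [Finset.card_powersetCard, Finset.card_erase_of_mem (Finset.mem_filter.1 hb).2,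
        hblocks b (Finset.mem_filter.1 hb).1]), Finset.sum_const, smul_eq_mul]
  -- pair count at {x, y}
  obtain ⟨l, hI⟩ : ∃ l : ℕ, v - 2 = l * (k-2) := by
    refine ⟨(𝓑.filter (fun b => x ∈ b ∧ y ∈ b)).card, ?_⟩
    have hxy2 : ({x, y} : Finset P).card = 2 := by
      rw [Finset.card_insert_of_notMem (by simpa using hxy), Finset.card_singleton]
    have hcover : (univ : Finset P) \ {x, y} =
        (𝓑.filter (fun b => x ∈ b ∧ y ∈ b)).biUnion (fun b => b \ {x, y}) := by
      ext z
      simp only [Finset.mem_sdiff, Finset.mem_biUnion, Finset.mem_filter, Finset.mem_univ,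
        true_and, Finset.mem_insert, Finset.mem_singleton]
      constructor
      · intro hz
        push_neg at hz
        have h3 : ({x, y, z} : Finset P).card = 3 := by
          rw [Finset.card_insert_of_notMem (by simp [hxy, Ne.symm hz.1]),
            Finset.card_insert_of_notMem (by simp [Ne.symm hz.2]), Finset.card_singleton]
        obtain ⟨b, hb, hsb⟩ := hex _ h3
        exact ⟨b, ⟨hb, hsb (by simp), hsb (by simp)⟩, hsb (by simp), by tauto⟩
      · rintro ⟨b, _, _, hz⟩
        tauto
    have hdisj : ∀ b ∈ 𝓑.filter (fun b => x ∈ b ∧ y ∈ b),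
        ∀ b' ∈ 𝓑.filter (fun b => x ∈ b ∧ y ∈ b), b ≠ b' →
        Disjoint (b \ {x, y}) (b' \ {x, y}) := by
      intro b hb b' hb' hne
      rw [Finset.mem_filter] at hb hb'
      rw [Finset.disjoint_left]
      intro z hz hz'
      rw [Finset.mem_sdiff, Finset.mem_insert, Finset.mem_singleton] at hz hz'
      push_neg at hz hz'
      have h3 : ({x, y, z} : Finset P).card = 3 := by
        rw [Finset.card_insert_of_notMem (by simp [hxy, Ne.symm hz.2.1]),
          Finset.card_insert_of_notMem (by simp [Ne.symm hz.2.2]), Finset.card_singleton]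
      refine hne (huniq _ h3 b hb.1 b' hb'.1 ?_ ?_)
      · exact Finset.insert_subset hb.2.1 (Finset.insert_subset hb.2.2 (by simp [hz.1]))
      · exact Finset.insert_subset hb'.2.1 (Finset.insert_subset hb'.2.2 (by simp [hz'.1]))
    have hcard : ((univ : Finset P) \ {x, y}).card =
        ∑ b ∈ 𝓑.filter (fun b => x ∈ b ∧ y ∈ b), (b \ {x, y}).card := by
      rw [hcover]; exact Finset.card_biUnion hdisj
    rw [Finset.card_sdiff_of_subset (Finset.subset_univ _), hxy2, Finset.card_univ, hv] at hcard
    rw [hcard, Finset.sum_congr rfl (fun b hb => by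
      rw [Finset.card_sdiff_of_subset, hxy2, hblocks b (Finset.mem_filter.1 hb).1]
      exact Finset.insert_subset (Finset.mem_filter.1 hb).2.1
        (by simpa using (Finset.mem_filter.1 hb).2.2)), Finset.sum_const, smul_eq_mul]
  -- the group is finite of order 60 or 120
  have hGfin : Finite G := by
    obtain h' | h' := hiso
    · obtain ⟨e⟩ := h'
      exact Finite.of_equiv _ e.symm.toEquiv
    · obtain ⟨e⟩ := h'
      exact Finite.of_equiv _ e.symm.toEquiv
  have hcardG : Nat.card G = 60 ∨ Nat.card G = 120 := by
    obtain h' | h' := hiso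
    · obtain ⟨e⟩ := h'
      left
      rw [Nat.card_congr e.toEquiv, Nat.card_eq_fintype_card]
      have h2 := @two_mul_card_alternatingGroup (Fin 5) _ _ _
      simp only [Fintype.card_perm, Fintype.card_fin] at h2
      simp only [Nat.factorial] at h2
      omega
    · obtain ⟨e⟩ := h'
      right
      rw [Nat.card_congr e.toEquiv, Nat.card_eq_fintype_card, Fintype.card_perm,
        Fintype.card_fin]
      simp [Nat.factorial]
  -- an element of order 3
  obtain ⟨g, hg3⟩ : ∃ g : G, orderOf g = 3 := by
    letI : Fintype G := Fintype.ofFinite G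
    haveI : Fact (Nat.Prime 3) := ⟨by norm_num⟩
    apply exists_prime_orderOf_dvd_card 3
    rw [← Nat.card_eq_fintype_card]
    rcases hcardG with h | h <;> rw [h] <;> norm_num
  -- g moves some point, giving a 3-point orbit
  have hg1 : g ≠ 1 := by
    intro h; rw [h, orderOf_one] at hg3; omega
  obtain ⟨a, ha⟩ : ∃ a : P, g • a ≠ a := by
    by_contra h
    push_neg at h
    exact hg1 (FaithfulSMul.eq_of_smul_eq_smul (fun a => by rw [h a, one_smul]))
  have hgpow : g * g * g = 1 := by
    have := pow_orderOf_eq_one g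
    rw [hg3] at this
    calc g * g * g = g ^ 3 := by rw [pow_succ, pow_two]
    _ = 1 := this
  have hcube : ∀ z : P, g • g • g • z = z := by
    intro z
    rw [← mul_smul, ← mul_smul, hgpow, one_smul]
  have h2 : g • g • a ≠ a := by
    intro h
    have h' := hcube a
    rw [h] at h'
    exact ha h'
  have h3 : g • g • a ≠ g • a := fun h => ha (MulAction.injective g h)
  set s : Finset P := {a, g • a, g • g • a} with hs
  have hs3 : s.card = 3 := by
    rw [hs, Finset.card_insert_of_notMem (by simp [Ne.symm ha, Ne.symm h2]),
      Finset.card_insert_of_notMem (by simp [Ne.symm h3]), Finset.card_singleton]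
  have hs_inv : s.image (fun z => g • z) = s := by
    rw [hs, Finset.image_insert, Finset.image_insert, Finset.image_singleton, hcube a]
    ext z
    simp only [Finset.mem_insert, Finset.mem_singleton]
    tauto
  obtain ⟨b0, hb0, hsb0⟩ := hex s hs3
  have hfix : b0.image (fun z => g • z) = b0 := by
    apply huniq s hs3 _ (hpres g b0 hb0) _ hb0 _ hsb0
    calc s = s.image (fun z => g • z) := hs_inv.symm
    _ ⊆ b0.image (fun z => g • z) := Finset.image_subset_image hsb0
  -- orbit–stabilizer: |𝓑| * |Stab b0| = |G|, and 3 divides |Stab b0|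
  have hsmul : ∀ (h : G) (c : Finset P), h • c = c.image (fun z => h • z) := fun h c => rfl
  have horb : MulAction.orbit G b0 = (𝓑 : Set (Finset P)) := by
    ext c
    constructor
    · rintro ⟨h, rfl⟩
      show (h • b0 : Finset P) ∈ (𝓑 : Set (Finset P))
      rw [Finset.mem_coe, hsmul]
      exact hpres h b0 hb0
    · intro hc
      obtain ⟨h, hh⟩ := htrans b0 hb0 c (Finset.mem_coe.1 hc)
      exact ⟨h, by show (h • b0 : Finset P) = c; rw [hsmul]; exact hh⟩
  have hgstab : g ∈ MulAction.stabilizer G b0 := by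
    rw [MulAction.mem_stabilizer_iff, hsmul]
    exact hfix
  have hos : Nat.card (MulAction.orbit G b0) * Nat.card (MulAction.stabilizer G b0)
      = Nat.card G := by
    letI : Fintype G := Fintype.ofFinite G
    letI : Fintype (MulAction.orbit G b0) := Fintype.ofFinite _
    letI : Fintype (MulAction.stabilizer G b0) := Fintype.ofFinite _
    rw [Nat.card_eq_fintype_card, Nat.card_eq_fintype_card, Nat.card_eq_fintype_card]
    exact MulAction.card_orbit_mul_card_stabilizer_eq_card_group G b0
  have hBorb : Nat.card (MulAction.orbit G b0) = 𝓑.card := by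
    rw [horb]
    simp [Nat.card_coe_set_eq, Set.ncard_coe_finset]
  have h3S : 3 ∣ Nat.card (MulAction.stabilizer G b0) := by
    have : orderOf (⟨g, hgstab⟩ : MulAction.stabilizer G b0) = 3 := by
      rw [← hg3]
      exact Subgroup.orderOf_mk g hgstab
    rw [← this]
    exact orderOf_dvd_natCard _
  have hBdvd : 𝓑.card ∣ 40 := by
    obtain ⟨S', hS'⟩ := h3S
    have h1 : 𝓑.card * (3 * S') = Nat.card G := by
      rw [← hS', ← hBorb]
      exact hos
    have h2 : 𝓑.card * 3 ∣ 120 := by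
      have : 𝓑.card * 3 ∣ Nat.card G := ⟨S', by rw [← h1]; ring⟩
      rcases hcardG with h | h <;> rw [h] at this
      · exact this.trans (by norm_num)
      · exact this
    obtain ⟨t, ht⟩ := h2
    refine ⟨t, ?_⟩
    have hcomm : 𝓑.card * 3 * t = 𝓑.card * t * 3 := by ring
    omega
  exact endgame v k r l 𝓑.card hk hkv hv5 hIII hII hI hBdvd
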